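/- Define B_α = 2^α ((α+1)^{1+1/α}/2 − (α+1))^α and C_α = α^α cos^{α+1}(πα/2)/sin^α(πα/2). Then B_α > C_α for every α ∈ (0,1). -/

import Mathlib

set_option maxHeartbeats 4000000
open Real

section CalBC

-- ln(1+a) ≥ 2a/(2+a) for 0 < a < 1
lemma log_lb {a : ℝ} (ha0 : 0 < a) (ha1 : a < 1) : 2*a/(2+a) ≤ Real.log (1+a) := by
  set p := 2*a/(2+a) with hp
  have h2a : (0:ℝ) < 2 + a := by linarith
  have hp0 : 0 ≤ p := by positivity
  have hp1 : p ≤ 1 := by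
    rw [hp, div_le_one h2a]; linarith
  have hexp := Real.exp_bound' hp0 hp1 (n := 3) (by norm_num)
  rw [Finset.sum_range_succ, Finset.sum_range_succ, Finset.sum_range_succ,
    Finset.sum_range_zero] at hexp
  norm_num [Nat.factorial] at hexp
  have key : 1 + p + p^2/2 + p^3*4/18 ≤ 1 + a := by
    have e : 1 + p + p^2/2 + p^3*4/18 = (1+a) - a^3*(2+9*a)/(9*(2+a)^3) := by
      rw [hp]; field_simp; ring
    rw [e]
    have : 0 ≤ a^3*(2+9*a)/(9*(2+a)^3) := by positivity
    linarith
  have : Real.exp p ≤ 1 + a := hexp.trans key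
  calc p = Real.log (Real.exp p) := (Real.log_exp p).symm
    _ ≤ Real.log (1+a) := Real.log_le_log (Real.exp_pos p) this

-- E4 lower bound of exp
lemma E4_le_exp {x : ℝ} (hx : 0 ≤ x) : 1 + x + x^2/2 + x^3/6 + x^4/24 ≤ Real.exp x := by
  have := Real.sum_le_exp_of_nonneg hx 5
  rw [Finset.sum_range_succ, Finset.sum_range_succ, Finset.sum_range_succ,
    Finset.sum_range_succ, Finset.sum_range_succ, Finset.sum_range_zero] at this
  norm_num [Nat.factorial] at this
  linarith

-- sin(πα/2) ≥ α for α ∈ [0,1]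
lemma sin_ge {α : ℝ} (h0 : 0 ≤ α) (h1 : α ≤ 1) : α ≤ Real.sin (Real.pi*α/2) := by
  have hpi := Real.pi_pos
  have := Real.mul_le_sin (x := Real.pi*α/2) (by positivity) (by nlinarith)
  calc α = 2/Real.pi * (Real.pi*α/2) := by field_simp
    _ ≤ Real.sin (Real.pi*α/2) := this

-- cot bound : t·cos t ≤ sin t on (0, π/2)
lemma cot_bound {t : ℝ} (h0 : 0 < t) (h1 : t < Real.pi/2) : t * Real.cos t ≤ Real.sin t := by
  have hc : 0 < Real.cos t := Real.cos_pos_of_mem_Ioo ⟨by linarith, h1⟩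
  have := Real.lt_tan h0 h1
  rw [Real.tan_eq_sin_div_cos] at this
  rw [lt_div_iff₀ hc] at this
  linarith

-- quartic cos upper bound at πa/2 :  cos(πa/2) ≤ 1 - 2(u - u³/4)² with u = πa/4, for 0 ≤ a < 1
lemma cos_quart {a : ℝ} (ha0 : 0 ≤ a) (ha1 : a < 1) :
    Real.cos (Real.pi*a/2) ≤ 1 - 2*(Real.pi*a/4 - (Real.pi*a/4)^3/4)^2 := by
  have hpi := Real.pi_pos
  have hpi4 : Real.pi < 4 := by nlinarith [Real.pi_lt_d2]
  set u := Real.pi*a/4 with hu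
  have hu0 : 0 ≤ u := by positivity
  have hu1 : u ≤ 1 := by
    rw [hu]; nlinarith
  have hsin : u - u^3/4 ≤ Real.sin u := by
    rcases eq_or_lt_of_le hu0 with h | h
    · simp [← h]
    · have := Real.sin_gt_sub_cube h; linarith [pow_pos h 3]
  have hw0 : 0 ≤ u - u^3/4 := by nlinarith [sq_nonneg u, mul_nonneg hu0 hu0]
  have hsq : (u - u^3/4)^2 ≤ Real.sin u ^ 2 := by
    have := pow_le_pow_left₀ hw0 hsin 2
    simpa using this
  have hcos : Real.cos (Real.pi*a/2) = 1 - 2 * Real.sin u ^ 2 := by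
    have := Real.sin_sq_eq_half_sub u
    have h2u : Real.pi*a/2 = 2*u := by rw [hu]; ring
    rw [h2u]; linarith
  rw [hcos]; linarith

lemma two_div_pi_le : 2/Real.pi ≤ 31831/50000 := by
  rw [div_le_iff₀ Real.pi_pos]
  nlinarith [Real.pi_gt_d6]



-- lower bound for g on a region: g ≥ (1+a)²·E4(x_b) − 2(1+a) for a ≤ α ≤ b < 1
lemma g_lb {α a b : ℝ} (hα0 : 0 < α) (hα1 : α < 1) (haα : a ≤ α) (hαb : α ≤ b)
    (ha0 : 0 ≤ a) (hb1 : b < 1) :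
    (1+a)^2 * (1 + (2*(1-b)/(2+b)) + (2*(1-b)/(2+b))^2/2 + (2*(1-b)/(2+b))^3/6
      + (2*(1-b)/(2+b))^4/24) - 2*(1+a)
    ≤ (α+1) ^ (1+1/α) - 2*(α+1) := by
  set xb := 2*(1-b)/(2+b) with hxb
  have hxb0 : 0 ≤ xb := by
    rw [hxb]; apply div_nonneg (by linarith) (by linarith)
  have hb2 : (0:ℝ) < 2 + b := by linarith
  have h1α : (0:ℝ) < 1 + α := by linarith
  -- (α+1)^(1+1/α) = (α+1)^2 * exp(((1-α)/α)·log(1+α))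
  have hsplit : (α+1:ℝ) ^ (1+1/α) = (α+1)^2 * Real.exp ((1-α)/α * Real.log (1+α)) := by
    have he : (1:ℝ)+1/α = 2 + (1-α)/α := by field_simp; ring
    rw [he, Real.rpow_add (by linarith : (0:ℝ) < α+1)]
    rw [show ((2:ℝ):ℝ) = ((2:ℕ):ℝ) by norm_num, Real.rpow_natCast]
    congr 1
    rw [Real.rpow_def_of_pos (by linarith : (0:ℝ) < α+1)]
    rw [show (α+1:ℝ) = 1+α by ring, mul_comm]
  -- exponent bound
  have hxα : xb ≤ (1-α)/α * Real.log (1+α) := by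
    have hL := log_lb hα0 hα1
    have h1 : (1-α)/α * (2*α/(2+α)) ≤ (1-α)/α * Real.log (1+α) := by
      apply mul_le_mul_of_nonneg_left hL
      apply div_nonneg (by linarith) hα0.le
    have h2 : (1-α)/α * (2*α/(2+α)) = 2*(1-α)/(2+α) := by
      field_simp
    have h3 : xb ≤ 2*(1-α)/(2+α) := by
      rw [hxb, div_le_div_iff₀ hb2 (by linarith)]
      nlinarith
    linarith
  have hE : 1 + xb + xb^2/2 + xb^3/6 + xb^4/24 ≤ Real.exp ((1-α)/α * Real.log (1+α)) := by
    calc 1 + xb + xb^2/2 + xb^3/6 + xb^4/24 ≤ Real.exp xb := E4_le_exp hxb0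
      _ ≤ _ := Real.exp_le_exp.2 hxα
  have hE1 : (1:ℝ) ≤ 1 + xb + xb^2/2 + xb^3/6 + xb^4/24 := by
    nlinarith [pow_nonneg hxb0 2, pow_nonneg hxb0 3, pow_nonneg hxb0 4]
  rw [hsplit]
  set E := 1 + xb + xb^2/2 + xb^3/6 + xb^4/24 with hE4
  have hsq : (1+a)^2 ≤ (α+1)^2 := by nlinarith
  have hc1' : (α+1)^2 * E ≤ (α+1)^2 * Real.exp ((1-α)/α * Real.log (1+α)) :=
    mul_le_mul_of_nonneg_left hE (by positivity)
  have hc2 : (1+a)^2 * E ≤ (α+1)^2 * E :=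
    mul_le_mul_of_nonneg_right hsq (by linarith)
  have hd : 2*(α - a) ≤ ((α+1)^2 - (1+a)^2) * E := by
    have h1 : 2*(α-a) ≤ (α+1)^2 - (1+a)^2 := by nlinarith
    nlinarith [mul_le_mul_of_nonneg_left hE1 (sub_nonneg.2 hsq)]
  have hd3 : 2*(α - a) ≤ (α+1)^2*E - (1+a)^2*E := by
    have hd2 : ((α+1)^2 - (1+a)^2) * E = (α+1)^2*E - (1+a)^2*E := by ring
    rw [← hd2]; exact hd
  clear_value E
  linarith

-- main step lemma for region [a,b]
lemma step (α a b CA B Cb : ℝ) (m k : ℕ)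
    (hα0 : 0 < α) (hα1 : α < 1) (haα : a ≤ α) (hαb : α ≤ b) (ha0 : 0 ≤ a) (hb1 : b < 1)
    (hCA : 1 - 2*(785375/1000000*a - (785375/1000000*a)^3/4)^2 ≤ CA)
    (hm : (m:ℝ) * b ≤ k)
    (hB : 2/Real.pi ≤ B ∨ CA ≤ B) (hB0 : 0 ≤ B)
    (hnum : B^k * CA^m < Cb^k) (hCb0 : 0 < Cb)
    (hGB : Cb ≤ (1+a)^2 * (1 + (2*(1-b)/(2+b)) + (2*(1-b)/(2+b))^2/2 + (2*(1-b)/(2+b))^3/6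
      + (2*(1-b)/(2+b))^4/24) - 2*(1+a)) :
    α * Real.cos (Real.pi*α/2) ^ ((α+1)/α) / Real.sin (Real.pi*α/2)
      < (α+1) ^ (1+1/α) - 2*(α+1) := by
  have hpi := Real.pi_pos
  set t := Real.pi*α/2 with ht
  have ht0 : 0 < t := by rw [ht]; positivity
  have htlt : t < Real.pi/2 := by rw [ht]; nlinarith
  set c := Real.cos t with hc
  set s := Real.sin t with hs
  have hc0 : 0 < c := Real.cos_pos_of_mem_Ioo ⟨by linarith, htlt⟩
  have hc1 : c ≤ 1 := Real.cos_le_one t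
  have hs0 : 0 < s := Real.sin_pos_of_pos_of_lt_pi ht0 (by nlinarith)
  have hsα : α ≤ s := sin_ge hα0.le hα1.le
  have htc : t * c ≤ s := cot_bound ht0 htlt
  -- c ≤ CA
  have hcCA : c ≤ CA := by
    have h1 : c ≤ Real.cos (Real.pi*a/2) := by
      rw [hc, ht]
      apply Real.cos_le_cos_of_nonneg_of_le_pi (by positivity) (by nlinarith) (by nlinarith)
    -- monotonicity: w(u) ≥ w(w0) with w0 = 0.785375a ≤ u = πa/4 ≤ 1
    set u := Real.pi*a/4 with hu
    set w0 : ℝ := 785375/1000000*a with hw0def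
    have hpilb : (31415:ℝ)/10000 < Real.pi := by nlinarith [Real.pi_gt_d6]
    have hw0u : w0 ≤ u := by rw [hw0def, hu]; nlinarith
    have hw00 : 0 ≤ w0 := by rw [hw0def]; positivity
    have hu1 : u ≤ 1 := by rw [hu]; nlinarith [Real.pi_lt_d2]
    have hmono : w0 - w0^3/4 ≤ u - u^3/4 := by
      have hid : (u - u^3/4) - (w0 - w0^3/4) = (u - w0)*(4 - (u^2 + u*w0 + w0^2))/4 := by
        ring
      have hu2 : u^2 ≤ 1 := by nlinarith
      have hw2 : w0^2 ≤ 1 := by nlinarith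
      have huw : u*w0 ≤ 1 := by nlinarith
      have hnn : 0 ≤ (u - w0)*(4 - (u^2 + u*w0 + w0^2)) :=
        mul_nonneg (by linarith) (by linarith)
      linarith
    have hwpos : 0 ≤ w0 - w0^3/4 := by nlinarith [mul_nonneg hw00 hw00]
    have hsq : (w0 - w0^3/4)^2 ≤ (u - u^3/4)^2 := by
      apply pow_le_pow_left₀ hwpos hmono
    have : Real.cos (Real.pi*a/2) ≤ 1 - 2*(w0 - w0^3/4)^2 := by
      have := cos_quart ha0 (lt_of_le_of_lt (haα.trans hαb) hb1)
      rw [← hu] at this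
      linarith
    linarith
  -- h ≤ M · c^(1/α)
  set M := min (2/Real.pi) c with hM
  have hM0 : 0 ≤ M := le_min (by positivity) hc0.le
  have hq0 : 0 ≤ c ^ (1/α : ℝ) := (Real.rpow_pos_of_pos hc0 _).le
  have hq1 : c ^ (1/α : ℝ) ≤ 1 := Real.rpow_le_one hc0.le hc1 (by positivity)
  have hsplitc : c ^ ((α+1)/α : ℝ) = c * c ^ (1/α : ℝ) := by
    rw [show (α+1)/α = 1 + 1/α by field_simp]
    rw [Real.rpow_add hc0, Real.rpow_one]
  have hfrac : α * c / s ≤ M := by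
    apply le_min
    · rw [div_le_div_iff₀ hs0 hpi]
      have e : α * c * Real.pi = 2*(t*c) := by rw [ht]; ring
      rw [e]; linarith
    · rw [div_le_iff₀ hs0]
      nlinarith
  have hhM : α * c ^ ((α+1)/α : ℝ) / s ≤ M * c ^ (1/α : ℝ) := by
    rw [hsplitc]
    have e : α * (c * c ^ (1/α : ℝ)) / s = (α * c / s) * c ^ (1/α : ℝ) := by ring
    rw [e]
    exact mul_le_mul_of_nonneg_right hfrac hq0
  have hh0 : 0 ≤ α * c ^ ((α+1)/α : ℝ) / s := by positivity
  -- k-th power bound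
  have hq5 : (c ^ (1/α : ℝ))^k ≤ CA^m := by
    have e1 : (c ^ (1/α : ℝ))^k = c ^ ((k:ℝ)/α) := by
      rw [← Real.rpow_natCast (c ^ (1/α : ℝ)) k, ← Real.rpow_mul hc0.le]
      rw [div_mul_eq_mul_div, one_mul]
    rw [e1]
    have hm' : (m:ℝ) ≤ k/α := by
      rw [le_div_iff₀ hα0]
      calc (m:ℝ)*α ≤ (m:ℝ)*b := by
            apply mul_le_mul_of_nonneg_left hαb (Nat.cast_nonneg m)
        _ ≤ k := hm
    calc c ^ ((k:ℝ)/α) ≤ c ^ (m:ℝ) := Real.rpow_le_rpow_of_exponent_ge hc0 hc1 hm'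
      _ = c ^ m := Real.rpow_natCast c m
      _ ≤ CA^m := pow_le_pow_left₀ hc0.le hcCA m
  have hMB : M ≤ B := by
    rcases hB with h | h
    · exact le_trans (min_le_left _ _) h
    · exact le_trans (min_le_right _ _) (hcCA.trans h)
  have hh5 : (α * c ^ ((α+1)/α : ℝ) / s)^k < Cb^k := by
    calc (α * c ^ ((α+1)/α : ℝ) / s)^k ≤ (M * c ^ (1/α : ℝ))^k :=
          pow_le_pow_left₀ hh0 hhM k
      _ = M^k * (c ^ (1/α : ℝ))^k := by rw [mul_pow]
      _ ≤ B^k * CA^m := by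
          apply mul_le_mul (pow_le_pow_left₀ hM0 hMB k) hq5 (by positivity)
            (by positivity)
      _ < Cb^k := hnum
  have hhCb : α * c ^ ((α+1)/α : ℝ) / s < Cb :=
    lt_of_pow_lt_pow_left₀ k hCb0.le hh5
  have := g_lb hα0 hα1 haα hαb ha0 hb1
  linarith



lemma step_final {α : ℝ} (haα : 85/100 ≤ α) (hα1 : α < 1) :
    α * Real.cos (Real.pi*α/2) ^ ((α+1)/α) / Real.sin (Real.pi*α/2)
      < (α+1) ^ (1+1/α) - 2*(α+1) := by
  have hα0 : (0:ℝ) < α := by linarith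
  have hpi := Real.pi_pos
  set t := Real.pi*α/2 with ht
  have ht0 : 0 < t := by rw [ht]; positivity
  have htlt : t < Real.pi/2 := by rw [ht]; nlinarith
  set c := Real.cos t with hc
  set s := Real.sin t with hs
  have hc0 : 0 < c := Real.cos_pos_of_mem_Ioo ⟨by linarith, htlt⟩
  have hc1 : c ≤ 1 := Real.cos_le_one t
  have hs0 : 0 < s := Real.sin_pos_of_pos_of_lt_pi ht0 (by nlinarith)
  have hsα : α ≤ s := sin_ge hα0.le hα1.le
  -- c^(1/α) ≤ c
  have hq : c ^ (1/α : ℝ) ≤ c := by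
    have h1 : (1:ℝ) ≤ 1/α := by rw [le_div_iff₀ hα0]; linarith
    calc c ^ (1/α : ℝ) ≤ c ^ (1:ℝ) := Real.rpow_le_rpow_of_exponent_ge hc0 hc1 h1
      _ = c := Real.rpow_one c
  have hsplitc : c ^ ((α+1)/α : ℝ) = c * c ^ (1/α : ℝ) := by
    rw [show (α+1)/α = 1 + 1/α by field_simp]
    rw [Real.rpow_add hc0, Real.rpow_one]
  have hhc : α * c ^ ((α+1)/α : ℝ) / s ≤ c * c := by
    rw [hsplitc]
    have e : α * (c * c ^ (1/α : ℝ)) / s = (α/s) * (c * c ^ (1/α : ℝ)) := by ring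
    rw [e]
    have h1 : α/s ≤ 1 := by rw [div_le_one hs0]; exact hsα
    have h2 : c * c ^ (1/α : ℝ) ≤ c * c := mul_le_mul_of_nonneg_left hq hc0.le
    have h3 : 0 ≤ c * c ^ (1/α : ℝ) := by positivity
    calc (α/s) * (c * c ^ (1/α : ℝ)) ≤ 1 * (c * c) := by
          apply mul_le_mul h1 h2 h3 (by norm_num)
      _ = c * c := by ring
  -- c ≤ 1.5708 (1-α)
  have hcr : c ≤ 15708/10000*(1-α) := by
    have h1 : c = Real.sin (Real.pi/2 - t) := (Real.sin_pi_div_two_sub t).symm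
    have h2 : Real.sin (Real.pi/2 - t) ≤ Real.pi/2 - t := Real.sin_le (by linarith)
    have h3 : Real.pi/2 - t = Real.pi*(1-α)/2 := by rw [ht]; ring
    have h4 : Real.pi*(1-α)/2 ≤ 15708/10000*(1-α) := by
      nlinarith [Real.pi_lt_d4]
    linarith
  have hcc : c * c ≤ (15708/10000*(1-α))^2 := by
    nlinarith
  -- g lower bound : α(1+α)(1-α)/(2+α)
  have h2α : (0:ℝ) < 2+α := by linarith
  have hsplit : (α+1:ℝ) ^ (1+1/α) = (α+1)^2 * Real.exp ((1-α)/α * Real.log (1+α)) := by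
    have he : (1:ℝ)+1/α = 2 + (1-α)/α := by field_simp; ring
    rw [he, Real.rpow_add (by linarith : (0:ℝ) < α+1)]
    rw [show ((2:ℝ):ℝ) = ((2:ℕ):ℝ) by norm_num, Real.rpow_natCast]
    congr 1
    rw [Real.rpow_def_of_pos (by linarith : (0:ℝ) < α+1)]
    rw [show (α+1:ℝ) = 1+α by ring, mul_comm]
  have hxα : 2*(1-α)/(2+α) ≤ (1-α)/α * Real.log (1+α) := by
    have hL := log_lb hα0 hα1
    have h1 : (1-α)/α * (2*α/(2+α)) ≤ (1-α)/α * Real.log (1+α) := by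
      apply mul_le_mul_of_nonneg_left hL
      apply div_nonneg (by linarith) hα0.le
    have h2 : (1-α)/α * (2*α/(2+α)) = 2*(1-α)/(2+α) := by field_simp
    linarith
  have hexp : 1 + 2*(1-α)/(2+α) ≤ Real.exp ((1-α)/α * Real.log (1+α)) := by
    calc 1 + 2*(1-α)/(2+α) ≤ Real.exp (2*(1-α)/(2+α)) := by
          linarith [Real.add_one_le_exp (2*(1-α)/(2+α))]
      _ ≤ _ := Real.exp_le_exp.2 hxα
  have hglb : α*(1+α)*(1-α)/(2+α) ≤ (α+1) ^ (1+1/α) - 2*(α+1) := by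
    rw [hsplit]
    have h1 : (α+1)^2 * (1 + 2*(1-α)/(2+α)) ≤ (α+1)^2 * Real.exp ((1-α)/α * Real.log (1+α)) :=
      mul_le_mul_of_nonneg_left hexp (by positivity)
    have hid : (α+1)^2*(1+2*(1-α)/(2+α)) - 2*(α+1) = α*(1+α)*(1-α)/(2+α) := by
      field_simp; ring
    linarith
  -- numeric comparison
  have hkey : (15708/10000*(1-α))^2 < α*(1+α)*(1-α)/(2+α) := by
    rw [lt_div_iff₀ h2α]
    nlinarith [sq_nonneg (1-α), mul_pos (sub_pos.2 hα1) hα0]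
  linarith

theorem calB_gt_calC (α : ℝ) (hα : α ∈ Set.Ioo (0:ℝ) 1) :
    α ^ α * Real.cos (Real.pi*α/2) ^ (α+1) / Real.sin (Real.pi*α/2) ^ α
      < 2 ^ α * ((α+1) ^ (1+ 1/α) / 2 - (α+1)) ^ α := by
  obtain ⟨hα0, hα1⟩ := hα
  have hcore : α * Real.cos (Real.pi*α/2) ^ ((α+1)/α) / Real.sin (Real.pi*α/2) < (α+1) ^ (1+1/α) - 2*(α+1) := by
    rcases le_or_gt α (3/200) with h0 | h0
    · exact step α (0) (3/200) (1) (31831/50000) (64939/100000) 60 5 hα0 hα1 hα0.le h0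
        (by norm_num) (by norm_num) (by norm_num) (by norm_num)
        (Or.inl two_div_pi_le) (by norm_num) (by norm_num) (by norm_num) (by norm_num)
    rcases le_or_gt α (3/100) with h1 | h1
    · exact step α (3/200) (3/100) (99973/100000) (31831/50000) (64089/100000) 60 5 hα0 hα1 h0.le h1
        (by norm_num) (by norm_num) (by norm_num) (by norm_num)
        (Or.inl two_div_pi_le) (by norm_num) (by norm_num) (by norm_num) (by norm_num)
    rcases le_or_gt α (9/200) with h2 | h2
    · exact step α (3/100) (9/200) (9989/10000) (31831/50000) (31609/50000) 60 5 hα0 hα1 h1.le h2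
        (by norm_num) (by norm_num) (by norm_num) (by norm_num)
        (Or.inl two_div_pi_le) (by norm_num) (by norm_num) (by norm_num) (by norm_num)
    rcases le_or_gt α (3/50) with h3 | h3
    · exact step α (9/200) (3/50) (99751/100000) (31831/50000) (62329/100000) 60 5 hα0 hα1 h2.le h3
        (by norm_num) (by norm_num) (by norm_num) (by norm_num)
        (Or.inl two_div_pi_le) (by norm_num) (by norm_num) (by norm_num) (by norm_num)
    rcases le_or_gt α (3/40) with h4 | h4
    · exact step α (3/50) (3/40) (99557/100000) (31831/50000) (30711/50000) 60 5 hα0 hα1 h3.le h4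
        (by norm_num) (by norm_num) (by norm_num) (by norm_num)
        (Or.inl two_div_pi_le) (by norm_num) (by norm_num) (by norm_num) (by norm_num)
    rcases le_or_gt α (9/100) with h5 | h5
    · exact step α (3/40) (9/100) (24827/25000) (31831/50000) (60499/100000) 55 5 hα0 hα1 h4.le h5
        (by norm_num) (by norm_num) (by norm_num) (by norm_num)
        (Or.inl two_div_pi_le) (by norm_num) (by norm_num) (by norm_num) (by norm_num)
    rcases le_or_gt α (21/200) with h6 | h6
    · exact step α (9/100) (21/200) (24751/25000) (31831/50000) (59561/100000) 47 5 hα0 hα1 h5.le h6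
        (by norm_num) (by norm_num) (by norm_num) (by norm_num)
        (Or.inl two_div_pi_le) (by norm_num) (by norm_num) (by norm_num) (by norm_num)
    rcases le_or_gt α (3/25) with h7 | h7
    · exact step α (21/200) (3/25) (19729/20000) (31831/50000) (3663/6250) 41 5 hα0 hα1 h6.le h7
        (by norm_num) (by norm_num) (by norm_num) (by norm_num)
        (Or.inl two_div_pi_le) (by norm_num) (by norm_num) (by norm_num) (by norm_num)
    rcases le_or_gt α (27/200) with h8 | h8
    · exact step α (3/25) (27/200) (12279/12500) (31831/50000) (28821/50000) 37 5 hα0 hα1 h7.le h8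
        (by norm_num) (by norm_num) (by norm_num) (by norm_num)
        (Or.inl two_div_pi_le) (by norm_num) (by norm_num) (by norm_num) (by norm_num)
    rcases le_or_gt α (3/20) with h9 | h9
    · exact step α (27/200) (3/20) (19553/20000) (31831/50000) (7083/12500) 33 5 hα0 hα1 h8.le h9
        (by norm_num) (by norm_num) (by norm_num) (by norm_num)
        (Or.inl two_div_pi_le) (by norm_num) (by norm_num) (by norm_num) (by norm_num)
    rcases le_or_gt α (33/200) with h10 | h10
    · exact step α (3/20) (33/200) (24311/25000) (31831/50000) (27837/50000) 30 5 hα0 hα1 h9.le h10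
        (by norm_num) (by norm_num) (by norm_num) (by norm_num)
        (Or.inl two_div_pi_le) (by norm_num) (by norm_num) (by norm_num) (by norm_num)
    rcases le_or_gt α (9/50) with h11 | h11
    · exact step α (33/200) (9/50) (9667/10000) (31831/50000) (54673/100000) 27 5 hα0 hα1 h10.le h11
        (by norm_num) (by norm_num) (by norm_num) (by norm_num)
        (Or.inl two_div_pi_le) (by norm_num) (by norm_num) (by norm_num) (by norm_num)
    rcases le_or_gt α (39/200) with h12 | h12
    · exact step α (9/50) (39/200) (96043/100000) (31831/50000) (53663/100000) 25 5 hα0 hα1 h11.le h12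
        (by norm_num) (by norm_num) (by norm_num) (by norm_num)
        (Or.inl two_div_pi_le) (by norm_num) (by norm_num) (by norm_num) (by norm_num)
    rcases le_or_gt α (21/100) with h13 | h13
    · exact step α (39/200) (21/100) (23841/25000) (31831/50000) (52643/100000) 23 5 hα0 hα1 h12.le h13
        (by norm_num) (by norm_num) (by norm_num) (by norm_num)
        (Or.inl two_div_pi_le) (by norm_num) (by norm_num) (by norm_num) (by norm_num)
    rcases le_or_gt α (9/40) with h14 | h14
    · exact step α (21/100) (9/40) (47317/50000) (31831/50000) (10323/20000) 22 5 hα0 hα1 h13.le h14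
        (by norm_num) (by norm_num) (by norm_num) (by norm_num)
        (Or.inl two_div_pi_le) (by norm_num) (by norm_num) (by norm_num) (by norm_num)
    rcases le_or_gt α (6/25) with h15 | h15
    · exact step α (9/40) (6/25) (23463/25000) (31831/50000) (50579/100000) 20 5 hα0 hα1 h14.le h15
        (by norm_num) (by norm_num) (by norm_num) (by norm_num)
        (Or.inl two_div_pi_le) (by norm_num) (by norm_num) (by norm_num) (by norm_num)
    rcases le_or_gt α (51/200) with h16 | h16
    · exact step α (6/25) (51/200) (4651/5000) (31831/50000) (49537/100000) 19 5 hα0 hα1 h15.le h16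
        (by norm_num) (by norm_num) (by norm_num) (by norm_num)
        (Or.inl two_div_pi_le) (by norm_num) (by norm_num) (by norm_num) (by norm_num)
    rcases le_or_gt α (27/100) with h17 | h17
    · exact step α (51/200) (27/100) (92139/100000) (31831/50000) (48487/100000) 18 5 hα0 hα1 h16.le h17
        (by norm_num) (by norm_num) (by norm_num) (by norm_num)
        (Or.inl two_div_pi_le) (by norm_num) (by norm_num) (by norm_num) (by norm_num)
    rcases le_or_gt α (57/200) with h18 | h18
    · exact step α (27/100) (57/200) (11401/12500) (31831/50000) (5929/12500) 17 5 hα0 hα1 h17.le h18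
        (by norm_num) (by norm_num) (by norm_num) (by norm_num)
        (Or.inl two_div_pi_le) (by norm_num) (by norm_num) (by norm_num) (by norm_num)
    rcases le_or_gt α (3/10) with h19 | h19
    · exact step α (57/200) (3/10) (9023/10000) (31831/50000) (11593/25000) 16 5 hα0 hα1 h18.le h19
        (by norm_num) (by norm_num) (by norm_num) (by norm_num)
        (Or.inl two_div_pi_le) (by norm_num) (by norm_num) (by norm_num) (by norm_num)
    rcases le_or_gt α (63/200) with h20 | h20
    · exact step α (3/10) (63/200) (22301/25000) (31831/50000) (45307/100000) 63 20 hα0 hα1 h19.le h20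
        (by norm_num) (by norm_num) (by norm_num) (by norm_num)
        (Or.inl two_div_pi_le) (by norm_num) (by norm_num) (by norm_num) (by norm_num)
    rcases le_or_gt α (33/100) with h21 | h21
    · exact step α (63/200) (33/100) (22033/25000) (31831/50000) (22119/50000) 15 5 hα0 hα1 h20.le h21
        (by norm_num) (by norm_num) (by norm_num) (by norm_num)
        (Or.inl two_div_pi_le) (by norm_num) (by norm_num) (by norm_num) (by norm_num)
    rcases le_or_gt α (69/200) with h22 | h22
    · exact step α (33/100) (69/200) (43507/50000) (31831/50000) (8633/20000) 57 20 hα0 hα1 h21.le h22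
        (by norm_num) (by norm_num) (by norm_num) (by norm_num)
        (Or.inl two_div_pi_le) (by norm_num) (by norm_num) (by norm_num) (by norm_num)
    rcases le_or_gt α (9/25) with h23 | h23
    · exact step α (69/200) (9/25) (85851/100000) (31831/50000) (42089/100000) 55 20 hα0 hα1 h22.le h23
        (by norm_num) (by norm_num) (by norm_num) (by norm_num)
        (Or.inl two_div_pi_le) (by norm_num) (by norm_num) (by norm_num) (by norm_num)
    rcases le_or_gt α (3/8) with h24 | h24
    · exact step α (9/25) (3/8) (16929/20000) (31831/50000) (4101/10000) 53 20 hα0 hα1 h23.le h24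
        (by norm_num) (by norm_num) (by norm_num) (by norm_num)
        (Or.inl two_div_pi_le) (by norm_num) (by norm_num) (by norm_num) (by norm_num)
    rcases le_or_gt α (387/1000) with h25 | h25
    · exact step α (3/8) (387/1000) (83397/100000) (31831/50000) (20461/50000) 51 20 hα0 hα1 h24.le h25
        (by norm_num) (by norm_num) (by norm_num) (by norm_num)
        (Or.inl two_div_pi_le) (by norm_num) (by norm_num) (by norm_num) (by norm_num)
    rcases le_or_gt α (399/1000) with h26 | h26
    · exact step α (387/1000) (399/1000) (2574/3125) (31831/50000) (40051/100000) 50 20 hα0 hα1 h25.le h26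
        (by norm_num) (by norm_num) (by norm_num) (by norm_num)
        (Or.inl two_div_pi_le) (by norm_num) (by norm_num) (by norm_num) (by norm_num)
    rcases le_or_gt α (411/1000) with h27 | h27
    · exact step α (399/1000) (411/1000) (81313/100000) (31831/50000) (19589/50000) 12 5 hα0 hα1 h26.le h27
        (by norm_num) (by norm_num) (by norm_num) (by norm_num)
        (Or.inl two_div_pi_le) (by norm_num) (by norm_num) (by norm_num) (by norm_num)
    rcases le_or_gt α (423/1000) with h28 | h28
    · exact step α (411/1000) (423/1000) (80233/100000) (31831/50000) (7661/20000) 47 20 hα0 hα1 h27.le h28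
        (by norm_num) (by norm_num) (by norm_num) (by norm_num)
        (Or.inl two_div_pi_le) (by norm_num) (by norm_num) (by norm_num) (by norm_num)
    rcases le_or_gt α (433/1000) with h29 | h29
    · exact step α (423/1000) (433/1000) (79129/100000) (31831/50000) (38083/100000) 46 20 hα0 hα1 h28.le h29
        (by norm_num) (by norm_num) (by norm_num) (by norm_num)
        (Or.inl two_div_pi_le) (by norm_num) (by norm_num) (by norm_num) (by norm_num)
    rcases le_or_gt α (443/1000) with h30 | h30
    · exact step α (433/1000) (443/1000) (78189/100000) (31831/50000) (37351/100000) 11 5 hα0 hα1 h29.le h30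
        (by norm_num) (by norm_num) (by norm_num) (by norm_num)
        (Or.inl two_div_pi_le) (by norm_num) (by norm_num) (by norm_num) (by norm_num)
    rcases le_or_gt α (453/1000) with h31 | h31
    · exact step α (443/1000) (453/1000) (38617/50000) (31831/50000) (36619/100000) 11 5 hα0 hα1 h30.le h31
        (by norm_num) (by norm_num) (by norm_num) (by norm_num)
        (Or.inl two_div_pi_le) (by norm_num) (by norm_num) (by norm_num) (by norm_num)
    rcases le_or_gt α (463/1000) with h32 | h32
    · exact step α (453/1000) (463/1000) (38131/50000) (31831/50000) (35887/100000) 43 20 hα0 hα1 h31.le h32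
        (by norm_num) (by norm_num) (by norm_num) (by norm_num)
        (Or.inl two_div_pi_le) (by norm_num) (by norm_num) (by norm_num) (by norm_num)
    rcases le_or_gt α (473/1000) with h33 | h33
    · exact step α (463/1000) (473/1000) (3011/4000) (31831/50000) (7031/20000) 42 20 hα0 hα1 h32.le h33
        (by norm_num) (by norm_num) (by norm_num) (by norm_num)
        (Or.inl two_div_pi_le) (by norm_num) (by norm_num) (by norm_num) (by norm_num)
    rcases le_or_gt α (481/1000) with h34 | h34
    · exact step α (473/1000) (481/1000) (2321/3125) (31831/50000) (4383/12500) 41 20 hα0 hα1 h33.le h34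
        (by norm_num) (by norm_num) (by norm_num) (by norm_num)
        (Or.inl two_div_pi_le) (by norm_num) (by norm_num) (by norm_num) (by norm_num)
    rcases le_or_gt α (489/1000) with h35 | h35
    · exact step α (481/1000) (489/1000) (73459/100000) (31831/50000) (34477/100000) 40 20 hα0 hα1 h34.le h35
        (by norm_num) (by norm_num) (by norm_num) (by norm_num)
        (Or.inl two_div_pi_le) (by norm_num) (by norm_num) (by norm_num) (by norm_num)
    rcases le_or_gt α (497/1000) with h36 | h36
    · exact step α (489/1000) (497/1000) (72637/100000) (31831/50000) (33889/100000) 10 5 hα0 hα1 h35.le h36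
        (by norm_num) (by norm_num) (by norm_num) (by norm_num)
        (Or.inl two_div_pi_le) (by norm_num) (by norm_num) (by norm_num) (by norm_num)
    rcases le_or_gt α (503/1000) with h37 | h37
    · exact step α (497/1000) (503/1000) (35903/50000) (31831/50000) (33939/100000) 39 20 hα0 hα1 h36.le h37
        (by norm_num) (by norm_num) (by norm_num) (by norm_num)
        (Or.inl two_div_pi_le) (by norm_num) (by norm_num) (by norm_num) (by norm_num)
    rcases le_or_gt α (511/1000) with h38 | h38
    · exact step α (503/1000) (511/1000) (71177/100000) (31831/50000) (32861/100000) 39 20 hα0 hα1 h37.le h38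
        (by norm_num) (by norm_num) (by norm_num) (by norm_num)
        (Or.inl two_div_pi_le) (by norm_num) (by norm_num) (by norm_num) (by norm_num)
    rcases le_or_gt α (517/1000) with h39 | h39
    · exact step α (511/1000) (517/1000) (7033/10000) (31831/50000) (8227/25000) 38 20 hα0 hα1 h38.le h39
        (by norm_num) (by norm_num) (by norm_num) (by norm_num)
        (Or.inl two_div_pi_le) (by norm_num) (by norm_num) (by norm_num) (by norm_num)
    rcases le_or_gt α (523/1000) with h40 | h40
    · exact step α (517/1000) (523/1000) (69689/100000) (31831/50000) (16233/50000) 38 20 hα0 hα1 h39.le h40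
        (by norm_num) (by norm_num) (by norm_num) (by norm_num)
        (Or.inl two_div_pi_le) (by norm_num) (by norm_num) (by norm_num) (by norm_num)
    rcases le_or_gt α (66/125) with h41 | h41
    · exact step α (523/1000) (66/125) (17261/25000) (31831/50000) (1617/5000) 37 20 hα0 hα1 h40.le h41
        (by norm_num) (by norm_num) (by norm_num) (by norm_num)
        (Or.inl two_div_pi_le) (by norm_num) (by norm_num) (by norm_num) (by norm_num)
    rcases le_or_gt α (267/500) with h42 | h42
    · exact step α (66/125) (267/500) (34251/50000) (31831/50000) (31657/100000) 37 20 hα0 hα1 h41.le h42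
        (by norm_num) (by norm_num) (by norm_num) (by norm_num)
        (Or.inl two_div_pi_le) (by norm_num) (by norm_num) (by norm_num) (by norm_num)
    rcases le_or_gt α (27/50) with h43 | h43
    · exact step α (267/500) (27/50) (67849/100000) (31831/50000) (1951/6250) 37 20 hα0 hα1 h42.le h43
        (by norm_num) (by norm_num) (by norm_num) (by norm_num)
        (Or.inl two_div_pi_le) (by norm_num) (by norm_num) (by norm_num) (by norm_num)
    rcases le_or_gt α (68/125) with h44 | h44
    · exact step α (27/50) (68/125) (6719/10000) (31831/50000) (31403/100000) 9 5 hα0 hα1 h43.le h44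
        (by norm_num) (by norm_num) (by norm_num) (by norm_num)
        (Or.inl two_div_pi_le) (by norm_num) (by norm_num) (by norm_num) (by norm_num)
    rcases le_or_gt α (549/1000) with h45 | h45
    · exact step α (68/125) (549/1000) (66749/100000) (31831/50000) (15397/50000) 36 20 hα0 hα1 h44.le h45
        (by norm_num) (by norm_num) (by norm_num) (by norm_num)
        (Or.inl two_div_pi_le) (by norm_num) (by norm_num) (by norm_num) (by norm_num)
    rcases le_or_gt α (277/500) with h46 | h46
    · exact step α (549/1000) (277/500) (13239/20000) (31831/50000) (15213/50000) 9 5 hα0 hα1 h45.le h46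
        (by norm_num) (by norm_num) (by norm_num) (by norm_num)
        (Or.inl two_div_pi_le) (by norm_num) (by norm_num) (by norm_num) (by norm_num)
    rcases le_or_gt α (557/1000) with h47 | h47
    · exact step α (277/500) (557/1000) (32819/50000) (31831/50000) (7671/25000) 35 20 hα0 hα1 h46.le h47
        (by norm_num) (by norm_num) (by norm_num) (by norm_num)
        (Or.inl two_div_pi_le) (by norm_num) (by norm_num) (by norm_num) (by norm_num)
    rcases le_or_gt α (14/25) with h48 | h48
    · exact step α (557/1000) (14/25) (32651/50000) (31831/50000) (30463/100000) 35 20 hα0 hα1 h47.le h48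
        (by norm_num) (by norm_num) (by norm_num) (by norm_num)
        (Or.inl two_div_pi_le) (by norm_num) (by norm_num) (by norm_num) (by norm_num)
    rcases le_or_gt α (563/1000) with h49 | h49
    · exact step α (14/25) (563/1000) (12993/20000) (31831/50000) (15121/50000) 35 20 hα0 hα1 h48.le h49
        (by norm_num) (by norm_num) (by norm_num) (by norm_num)
        (Or.inl two_div_pi_le) (by norm_num) (by norm_num) (by norm_num) (by norm_num)
    rcases le_or_gt α (567/1000) with h50 | h50
    · exact step α (563/1000) (567/1000) (64627/100000) (31831/50000) (29709/100000) 35 20 hα0 hα1 h49.le h50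
        (by norm_num) (by norm_num) (by norm_num) (by norm_num)
        (Or.inl two_div_pi_le) (by norm_num) (by norm_num) (by norm_num) (by norm_num)
    rcases le_or_gt α (571/1000) with h51 | h51
    · exact step α (567/1000) (571/1000) (2567/4000) (31831/50000) (5883/20000) 35 20 hα0 hα1 h50.le h51
        (by norm_num) (by norm_num) (by norm_num) (by norm_num)
        (Or.inl two_div_pi_le) (by norm_num) (by norm_num) (by norm_num) (by norm_num)
    rcases le_or_gt α (573/1000) with h52 | h52
    · exact step α (571/1000) (573/1000) (31861/50000) (31831/50000) (29743/100000) 34 20 hα0 hα1 h51.le h52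
        (by norm_num) (by norm_num) (by norm_num) (by norm_num)
        (Or.inl two_div_pi_le) (by norm_num) (by norm_num) (by norm_num) (by norm_num)
    rcases le_or_gt α (23/40) with h53 | h53
    · exact step α (573/1000) (23/40) (31747/50000) (31747/50000) (7399/25000) 34 20 hα0 hα1 h52.le h53
        (by norm_num) (by norm_num) (by norm_num) (by norm_num)
        (Or.inr le_rfl) (by norm_num) (by norm_num) (by norm_num) (by norm_num)
    rcases le_or_gt α (289/500) with h54 | h54
    · exact step α (23/40) (289/500) (63267/100000) (63267/100000) (29137/100000) 34 20 hα0 hα1 h53.le h54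
        (by norm_num) (by norm_num) (by norm_num) (by norm_num)
        (Or.inr le_rfl) (by norm_num) (by norm_num) (by norm_num) (by norm_num)
    rcases le_or_gt α (581/1000) with h55 | h55
    · exact step α (289/500) (581/1000) (15731/25000) (15731/25000) (28917/100000) 34 20 hα0 hα1 h54.le h55
        (by norm_num) (by norm_num) (by norm_num) (by norm_num)
        (Or.inr le_rfl) (by norm_num) (by norm_num) (by norm_num) (by norm_num)
    rcases le_or_gt α (117/200) with h56 | h56
    · exact step α (581/1000) (117/200) (3129/5000) (3129/5000) (28387/100000) 34 20 hα0 hα1 h55.le h56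
        (by norm_num) (by norm_num) (by norm_num) (by norm_num)
        (Or.inr le_rfl) (by norm_num) (by norm_num) (by norm_num) (by norm_num)
    rcases le_or_gt α (147/250) with h57 | h57
    · exact step α (117/200) (147/250) (62121/100000) (62121/100000) (14201/50000) 34 20 hα0 hα1 h56.le h57
        (by norm_num) (by norm_num) (by norm_num) (by norm_num)
        (Or.inr le_rfl) (by norm_num) (by norm_num) (by norm_num) (by norm_num)
    rcases le_or_gt α (591/1000) with h58 | h58
    · exact step α (147/250) (591/1000) (2471/4000) (2471/4000) (14091/50000) 33 20 hα0 hα1 h57.le h58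
        (by norm_num) (by norm_num) (by norm_num) (by norm_num)
        (Or.inr le_rfl) (by norm_num) (by norm_num) (by norm_num) (by norm_num)
    rcases le_or_gt α (119/200) with h59 | h59
    · exact step α (591/1000) (119/200) (61429/100000) (61429/100000) (27653/100000) 33 20 hα0 hα1 h58.le h59
        (by norm_num) (by norm_num) (by norm_num) (by norm_num)
        (Or.inr le_rfl) (by norm_num) (by norm_num) (by norm_num) (by norm_num)
    rcases le_or_gt α (3/5) with h60 | h60
    · exact step α (119/200) (3/5) (12193/20000) (12193/20000) (27053/100000) 33 20 hα0 hα1 h59.le h60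
        (by norm_num) (by norm_num) (by norm_num) (by norm_num)
        (Or.inr le_rfl) (by norm_num) (by norm_num) (by norm_num) (by norm_num)
    rcases le_or_gt α (303/500) with h61 | h61
    · exact step α (3/5) (303/500) (1887/3125) (1887/3125) (26381/100000) 33 20 hα0 hα1 h60.le h61
        (by norm_num) (by norm_num) (by norm_num) (by norm_num)
        (Or.inr le_rfl) (by norm_num) (by norm_num) (by norm_num) (by norm_num)
    rcases le_or_gt α (611/1000) with h62 | h62
    · exact step α (303/500) (611/1000) (59683/100000) (59683/100000) (26249/100000) 8 5 hα0 hα1 h61.le h62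
        (by norm_num) (by norm_num) (by norm_num) (by norm_num)
        (Or.inr le_rfl) (by norm_num) (by norm_num) (by norm_num) (by norm_num)
    rcases le_or_gt α (617/1000) with h63 | h63
    · exact step α (611/1000) (617/1000) (7387/12500) (7387/12500) (25579/100000) 8 5 hα0 hα1 h62.le h63
        (by norm_num) (by norm_num) (by norm_num) (by norm_num)
        (Or.inr le_rfl) (by norm_num) (by norm_num) (by norm_num) (by norm_num)
    rcases le_or_gt α (623/1000) with h64 | h64
    · exact step α (617/1000) (623/1000) (5839/10000) (5839/10000) (12571/50000) 8 5 hα0 hα1 h63.le h64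
        (by norm_num) (by norm_num) (by norm_num) (by norm_num)
        (Or.inr le_rfl) (by norm_num) (by norm_num) (by norm_num) (by norm_num)
    rcases le_or_gt α (629/1000) with h65 | h65
    · exact step α (623/1000) (629/1000) (721/1250) (721/1250) (4941/20000) 31 20 hα0 hα1 h64.le h65
        (by norm_num) (by norm_num) (by norm_num) (by norm_num)
        (Or.inr le_rfl) (by norm_num) (by norm_num) (by norm_num) (by norm_num)
    rcases le_or_gt α (127/200) with h66 | h66
    · exact step α (629/1000) (127/200) (56967/100000) (56967/100000) (24269/100000) 31 20 hα0 hα1 h65.le h66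
        (by norm_num) (by norm_num) (by norm_num) (by norm_num)
        (Or.inr le_rfl) (by norm_num) (by norm_num) (by norm_num) (by norm_num)
    rcases le_or_gt α (643/1000) with h67 | h67
    · exact step α (127/200) (643/1000) (56251/100000) (56251/100000) (23231/100000) 31 20 hα0 hα1 h66.le h67
        (by norm_num) (by norm_num) (by norm_num) (by norm_num)
        (Or.inr le_rfl) (by norm_num) (by norm_num) (by norm_num) (by norm_num)
    rcases le_or_gt α (649/1000) with h68 | h68
    · exact step α (643/1000) (649/1000) (55293/100000) (55293/100000) (23253/100000) 30 20 hα0 hα1 h67.le h68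
        (by norm_num) (by norm_num) (by norm_num) (by norm_num)
        (Or.inr le_rfl) (by norm_num) (by norm_num) (by norm_num) (by norm_num)
    rcases le_or_gt α (657/1000) with h69 | h69
    · exact step α (649/1000) (657/1000) (54571/100000) (54571/100000) (22219/100000) 30 20 hα0 hα1 h68.le h69
        (by norm_num) (by norm_num) (by norm_num) (by norm_num)
        (Or.inr le_rfl) (by norm_num) (by norm_num) (by norm_num) (by norm_num)
    rcases le_or_gt α (133/200) with h70 | h70
    · exact step α (657/1000) (133/200) (13401/25000) (13401/25000) (10821/50000) 30 20 hα0 hα1 h69.le h70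
        (by norm_num) (by norm_num) (by norm_num) (by norm_num)
        (Or.inr le_rfl) (by norm_num) (by norm_num) (by norm_num) (by norm_num)
    rcases le_or_gt α (673/1000) with h71 | h71
    · exact step α (133/200) (673/1000) (52633/100000) (52633/100000) (10533/50000) 29 20 hα0 hα1 h70.le h71
        (by norm_num) (by norm_num) (by norm_num) (by norm_num)
        (Or.inr le_rfl) (by norm_num) (by norm_num) (by norm_num) (by norm_num)
    rcases le_or_gt α (683/1000) with h72 | h72
    · exact step α (673/1000) (683/1000) (25829/50000) (25829/50000) (9949/50000) 29 20 hα0 hα1 h71.le h72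
        (by norm_num) (by norm_num) (by norm_num) (by norm_num)
        (Or.inr le_rfl) (by norm_num) (by norm_num) (by norm_num) (by norm_num)
    rcases le_or_gt α (691/1000) with h73 | h73
    · exact step α (683/1000) (691/1000) (10087/20000) (10087/20000) (4943/25000) 7 5 hα0 hα1 h72.le h73
        (by norm_num) (by norm_num) (by norm_num) (by norm_num)
        (Or.inr le_rfl) (by norm_num) (by norm_num) (by norm_num) (by norm_num)
    rcases le_or_gt α (701/1000) with h74 | h74
    · exact step α (691/1000) (701/1000) (12363/25000) (12363/25000) (1861/10000) 7 5 hα0 hα1 h73.le h74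
        (by norm_num) (by norm_num) (by norm_num) (by norm_num)
        (Or.inr le_rfl) (by norm_num) (by norm_num) (by norm_num) (by norm_num)
    rcases le_or_gt α (711/1000) with h75 | h75
    · exact step α (701/1000) (711/1000) (48219/100000) (48219/100000) (17897/100000) 7 5 hα0 hα1 h74.le h75
        (by norm_num) (by norm_num) (by norm_num) (by norm_num)
        (Or.inr le_rfl) (by norm_num) (by norm_num) (by norm_num) (by norm_num)
    rcases le_or_gt α (721/1000) with h76 | h76
    · exact step α (711/1000) (721/1000) (23491/50000) (23491/50000) (3437/20000) 27 20 hα0 hα1 h75.le h76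
        (by norm_num) (by norm_num) (by norm_num) (by norm_num)
        (Or.inr le_rfl) (by norm_num) (by norm_num) (by norm_num) (by norm_num)
    rcases le_or_gt α (731/1000) with h77 | h77
    · exact step α (721/1000) (731/1000) (45741/100000) (45741/100000) (8237/50000) 27 20 hα0 hα1 h76.le h77
        (by norm_num) (by norm_num) (by norm_num) (by norm_num)
        (Or.inr le_rfl) (by norm_num) (by norm_num) (by norm_num) (by norm_num)
    rcases le_or_gt α (741/1000) with h78 | h78
    · exact step α (731/1000) (741/1000) (2781/6250) (2781/6250) (3153/20000) 26 20 hα0 hα1 h77.le h78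
        (by norm_num) (by norm_num) (by norm_num) (by norm_num)
        (Or.inr le_rfl) (by norm_num) (by norm_num) (by norm_num) (by norm_num)
    rcases le_or_gt α (751/1000) with h79 | h79
    · exact step α (741/1000) (751/1000) (43249/100000) (43249/100000) (15057/100000) 26 20 hα0 hα1 h78.le h79
        (by norm_num) (by norm_num) (by norm_num) (by norm_num)
        (Or.inr le_rfl) (by norm_num) (by norm_num) (by norm_num) (by norm_num)
    rcases le_or_gt α (763/1000) with h80 | h80
    · exact step α (751/1000) (763/1000) (21/50) (21/50) (6889/50000) 26 20 hα0 hα1 h79.le h80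
        (by norm_num) (by norm_num) (by norm_num) (by norm_num)
        (Or.inr le_rfl) (by norm_num) (by norm_num) (by norm_num) (by norm_num)
    rcases le_or_gt α (773/1000) with h81 | h81
    · exact step α (763/1000) (773/1000) (20249/50000) (20249/50000) (6753/50000) 25 20 hα0 hα1 h80.le h81
        (by norm_num) (by norm_num) (by norm_num) (by norm_num)
        (Or.inr le_rfl) (by norm_num) (by norm_num) (by norm_num) (by norm_num)
    rcases le_or_gt α (157/200) with h82 | h82
    · exact step α (773/1000) (157/200) (19623/50000) (19623/50000) (2447/20000) 25 20 hα0 hα1 h81.le h82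
        (by norm_num) (by norm_num) (by norm_num) (by norm_num)
        (Or.inr le_rfl) (by norm_num) (by norm_num) (by norm_num) (by norm_num)
    rcases le_or_gt α (797/1000) with h83 | h83
    · exact step α (157/200) (797/1000) (18871/50000) (18871/50000) (11397/100000) 25 20 hα0 hα1 h82.le h83
        (by norm_num) (by norm_num) (by norm_num) (by norm_num)
        (Or.inr le_rfl) (by norm_num) (by norm_num) (by norm_num) (by norm_num)
    rcases le_or_gt α (807/1000) with h84 | h84
    · exact step α (797/1000) (807/1000) (36239/100000) (36239/100000) (2781/25000) 6 5 hα0 hα1 h83.le h84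
        (by norm_num) (by norm_num) (by norm_num) (by norm_num)
        (Or.inr le_rfl) (by norm_num) (by norm_num) (by norm_num) (by norm_num)
    rcases le_or_gt α (817/1000) with h85 | h85
    · exact step α (807/1000) (817/1000) (34987/100000) (34987/100000) (2607/25000) 6 5 hα0 hα1 h84.le h85
        (by norm_num) (by norm_num) (by norm_num) (by norm_num)
        (Or.inr le_rfl) (by norm_num) (by norm_num) (by norm_num) (by norm_num)
    rcases le_or_gt α (829/1000) with h86 | h86
    · exact step α (817/1000) (829/1000) (4217/12500) (4217/12500) (9173/100000) 24 20 hα0 hα1 h85.le h86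
        (by norm_num) (by norm_num) (by norm_num) (by norm_num)
        (Or.inr le_rfl) (by norm_num) (by norm_num) (by norm_num) (by norm_num)
    rcases le_or_gt α (839/1000) with h87 | h87
    · exact step α (829/1000) (839/1000) (16119/50000) (16119/50000) (8901/100000) 23 20 hα0 hα1 h86.le h87
        (by norm_num) (by norm_num) (by norm_num) (by norm_num)
        (Or.inr le_rfl) (by norm_num) (by norm_num) (by norm_num) (by norm_num)
    rcases le_or_gt α (849/1000) with h88 | h88
    · exact step α (839/1000) (849/1000) (1937/6250) (1937/6250) (821/10000) 23 20 hα0 hα1 h87.le h88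
        (by norm_num) (by norm_num) (by norm_num) (by norm_num)
        (Or.inr le_rfl) (by norm_num) (by norm_num) (by norm_num) (by norm_num)
    rcases le_or_gt α (17/20) with h89 | h89
    · exact step α (849/1000) (17/20) (29749/100000) (29749/100000) (10029/100000) 5 5 hα0 hα1 h88.le h89
        (by norm_num) (by norm_num) (by norm_num) (by norm_num)
        (Or.inr le_rfl) (by norm_num) (by norm_num) (by norm_num) (by norm_num)
    exact step_final (by linarith : (85:ℝ)/100 ≤ α) hα1
  have hpi := Real.pi_pos
  set t := Real.pi*α/2 with ht
  have ht0 : 0 < t := by rw [ht]; positivity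
  have htlt : t < Real.pi/2 := by rw [ht]; nlinarith
  set c := Real.cos t with hc
  set s := Real.sin t with hs
  have hc0 : 0 < c := Real.cos_pos_of_mem_Ioo ⟨by linarith, htlt⟩
  have hs0 : 0 < s := Real.sin_pos_of_pos_of_lt_pi ht0 (by nlinarith)
  set X := α * c ^ ((α+1)/α : ℝ) / s with hX
  have hX0 : 0 ≤ X := by rw [hX]; positivity
  set D := (α+1) ^ (1+1/α : ℝ) / 2 - (α+1) with hD
  have h2D : (α+1) ^ (1+1/α : ℝ) - 2*(α+1) = 2*D := by rw [hD]; ring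
  have hXD : X < 2*D := by rw [← h2D]; exact hcore
  have hD0 : 0 ≤ 2*D := le_trans hX0 hXD.le
  have eL : α ^ α * c ^ (α+1 : ℝ) / s ^ (α : ℝ) = X ^ (α : ℝ) := by
    rw [hX, Real.div_rpow (by positivity) hs0.le, Real.mul_rpow hα0.le (by positivity)]
    rw [← Real.rpow_mul hc0.le]
    rw [show (α+1)/α*α = α+1 by field_simp]
  have eR : 2 ^ (α:ℝ) * D ^ (α:ℝ) = (2*D) ^ (α:ℝ) := by
    rw [Real.mul_rpow (by norm_num) (by linarith [hD0, hXD, hX0] : (0:ℝ) ≤ D)]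
  rw [eL, eR]
  exact Real.rpow_lt_rpow hX0 hXD hα0

end CalBC
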